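/- The Steiner circumellipse of the cusp triangle T' is an axis-aligned ellipse centered at C̄ with semi-axes 3c²/(2a) (horizontal) and 3c²/(2b) (vertical); in particular it is similar to a 90°-rotated copy of E and its dimensions are independent of u. Precisely, each cusp P_i' = (x_i', y_i'), i = 1,2,3, satisfies (x_i' − C̄_x)²·(2a/(3c²))² + (y_i' − C̄_y)²·(2b/(3c²))² = 1, where C̄ = (C̄_x, C̄_y) is the barycenter of P₁', P₂', P₃'. -/

import Mathlib

open Real

noncomputable def steinerHat (a b u t : ℝ) : ℝ × ℝ :=
  (((a ^ 2 - b ^ 2) * (1 + cos (t + u)) * cos t - a ^ 2 * cos u) / a,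
   ((a ^ 2 - b ^ 2) * cos t * sin (t + u) - (a ^ 2 - b ^ 2) * sin t - a ^ 2 * sin u) / b)

lemma shat_cusp (a b p : ℝ) (k : ℤ) :
    steinerHat a b (3 * p - k * (2 * π)) (-p)
    = (3 * (a ^ 2 - b ^ 2) / (2 * a) * cos p - (a ^ 2 + b ^ 2) * cos (3 * p) / (2 * a),
       3 * (a ^ 2 - b ^ 2) / (2 * b) * sin p - (a ^ 2 + b ^ 2) * sin (3 * p) / (2 * b)) := by
  unfold steinerHat
  rw [show (-p + (3 * p - k * (2 * π))) = 2 * p - k * (2 * π) by ring,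
    Real.cos_sub_int_mul_two_pi, Real.sin_sub_int_mul_two_pi,
    Real.cos_sub_int_mul_two_pi, Real.sin_sub_int_mul_two_pi,
    Real.cos_neg, Real.sin_neg, Real.cos_two_mul, Real.sin_two_mul,
    Real.cos_three_mul, Real.sin_three_mul]
  have h := Real.sin_sq_add_cos_sq p
  simp only [Prod.mk.injEq]
  constructor
  · ring
  · rcases eq_or_ne b 0 with hb | hb
    · simp [hb]
    · field_simp
      linear_combination (4 * (a ^ 2 - b ^ 2) * sin p) * h

theorem stmt9 (a b u : ℝ) (hb : 0 < b) (hab : b < a)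
    (P₁' P₂' P₃' C : ℝ × ℝ)
    (hP₁' : P₁' = steinerHat a b u (-u / 3))
    (hP₂' : P₂' = steinerHat a b u (-u / 3 - 2 * π / 3))
    (hP₃' : P₃' = steinerHat a b u (-u / 3 - 4 * π / 3))
    (hC : C = ((P₁'.1 + P₂'.1 + P₃'.1) / 3, (P₁'.2 + P₂'.2 + P₃'.2) / 3)) :
    C = (-((a ^ 2 + b ^ 2) * cos u) / (2 * a), -((a ^ 2 + b ^ 2) * sin u) / (2 * b)) ∧
    (P₁'.1 - C.1) ^ 2 * (2 * a / (3 * (a ^ 2 - b ^ 2))) ^ 2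
      + (P₁'.2 - C.2) ^ 2 * (2 * b / (3 * (a ^ 2 - b ^ 2))) ^ 2 = 1 ∧
    (P₂'.1 - C.1) ^ 2 * (2 * a / (3 * (a ^ 2 - b ^ 2))) ^ 2
      + (P₂'.2 - C.2) ^ 2 * (2 * b / (3 * (a ^ 2 - b ^ 2))) ^ 2 = 1 ∧
    (P₃'.1 - C.1) ^ 2 * (2 * a / (3 * (a ^ 2 - b ^ 2))) ^ 2
      + (P₃'.2 - C.2) ^ 2 * (2 * b / (3 * (a ^ 2 - b ^ 2))) ^ 2 = 1 := by
  have ha0 : (0:ℝ) < a := hb.trans hab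
  have hane : a ≠ 0 := ne_of_gt ha0
  have hbne : b ≠ 0 := ne_of_gt hb
  have hcne : a ^ 2 - b ^ 2 ≠ 0 := by nlinarith
  set p₁ := u / 3 with hp1
  set p₂ := u / 3 + 2 * π / 3 with hp2
  set p₃ := u / 3 + 4 * π / 3 with hp3
  -- rewrite each cusp via shat_cusp
  have e1 : P₁' = steinerHat a b (3 * p₁ - (0:ℤ) * (2 * π)) (-p₁) := by
    rw [hP₁']; congr 1 <;> push_cast <;> ring
  have e2 : P₂' = steinerHat a b (3 * p₂ - (1:ℤ) * (2 * π)) (-p₂) := by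
    rw [hP₂']; congr 1 <;> push_cast <;> ring
  have e3 : P₃' = steinerHat a b (3 * p₃ - (2:ℤ) * (2 * π)) (-p₃) := by
    rw [hP₃']; congr 1 <;> push_cast <;> ring
  rw [shat_cusp] at e1 e2 e3
  have h3p1 : cos (3 * p₁) = cos u ∧ sin (3 * p₁) = sin u := by
    constructor <;> · congr 1; rw [hp1]; ring
  have h3p2 : cos (3 * p₂) = cos u ∧ sin (3 * p₂) = sin u := by
    constructor
    · rw [show 3 * p₂ = u + (1:ℤ) * (2 * π) by push_cast [hp2]; ring,
        Real.cos_add_int_mul_two_pi]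
    · rw [show 3 * p₂ = u + (1:ℤ) * (2 * π) by push_cast [hp2]; ring,
        Real.sin_add_int_mul_two_pi]
  have h3p3 : cos (3 * p₃) = cos u ∧ sin (3 * p₃) = sin u := by
    constructor
    · rw [show 3 * p₃ = u + (2:ℤ) * (2 * π) by push_cast [hp3]; ring,
        Real.cos_add_int_mul_two_pi]
    · rw [show 3 * p₃ = u + (2:ℤ) * (2 * π) by push_cast [hp3]; ring,
        Real.sin_add_int_mul_two_pi]
  rw [h3p1.1, h3p1.2] at e1
  rw [h3p2.1, h3p2.2] at e2
  rw [h3p3.1, h3p3.2] at e3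
  -- special values
  have hc23 : cos (2 * π / 3) = -(1/2) := by
    rw [show 2 * π / 3 = π - π / 3 by ring, Real.cos_pi_sub, Real.cos_pi_div_three]
  have hs23 : sin (2 * π / 3) = Real.sqrt 3 / 2 := by
    rw [show 2 * π / 3 = π - π / 3 by ring, Real.sin_pi_sub, Real.sin_pi_div_three]
  have hc43 : cos (4 * π / 3) = -(1/2) := by
    rw [show 4 * π / 3 = π - -(π / 3) by ring, Real.cos_pi_sub, Real.cos_neg,
      Real.cos_pi_div_three]
  have hs43 : sin (4 * π / 3) = -(Real.sqrt 3 / 2) := by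
    rw [show 4 * π / 3 = π - -(π / 3) by ring, Real.sin_pi_sub, Real.sin_neg,
      Real.sin_pi_div_three]
  have hcp2 : cos p₂ = cos p₁ * (-(1/2)) - sin p₁ * (Real.sqrt 3 / 2) := by
    rw [hp2, hp1, Real.cos_add, hc23, hs23]
  have hsp2 : sin p₂ = sin p₁ * (-(1/2)) + cos p₁ * (Real.sqrt 3 / 2) := by
    rw [hp2, hp1, Real.sin_add, hc23, hs23]
  have hcp3 : cos p₃ = cos p₁ * (-(1/2)) - sin p₁ * (-(Real.sqrt 3 / 2)) := by
    rw [hp3, hp1, Real.cos_add, hc43, hs43]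
  have hsp3 : sin p₃ = sin p₁ * (-(1/2)) + cos p₁ * (-(Real.sqrt 3 / 2)) := by
    rw [hp3, hp1, Real.sin_add, hc43, hs43]
  have hCeq : C = (-((a ^ 2 + b ^ 2) * cos u) / (2 * a),
      -((a ^ 2 + b ^ 2) * sin u) / (2 * b)) := by
    rw [hC, e1, e2, e3]
    simp only [Prod.mk.injEq]
    constructor
    · rw [hcp2, hcp3]; field_simp; ring
    · rw [hsp2, hsp3]; field_simp; ring
  refine ⟨hCeq, ?_, ?_, ?_⟩
  · rw [e1, hCeq]
    have h := Real.sin_sq_add_cos_sq p₁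
    field_simp
    linear_combination (9 * (a ^ 2 - b ^ 2) ^ 2) * h
  · rw [e2, hCeq]
    have h := Real.sin_sq_add_cos_sq p₂
    field_simp
    linear_combination (9 * (a ^ 2 - b ^ 2) ^ 2) * h
  · rw [e3, hCeq]
    have h := Real.sin_sq_add_cos_sq p₃
    field_simp
    linear_combination (9 * (a ^ 2 - b ^ 2) ^ 2) * h
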